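/- In Γ_{n−2}(n) (vertices: (n−1)-element singular subsets of Π_n, adjacency: intersection of size n−2 with singular union), every maximal clique is a top ⟨U] for a maximal singular subset U of size n; in particular every star [S,U] with |S| = n−2 is contained in a top. -/

import Mathlib

open Finset

/-- The point set J = {±1, …, ±n} of the thin polar space Π_n. -/
noncomputable def polarJ (n : ℕ) : Finset ℤ := (Finset.Icc (-(n : ℤ)) (n : ℤ)).erase 0

/-- A subset of J is singular iff it contains no pair {i, -i}. -/
def Sing (n : ℕ) (S : Finset ℤ) : Prop := S ⊆ polarJ n ∧ ∀ i ∈ S, -i ∉ S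

/-- A clique of Γ_{n-2}(n), viewed as a family of (n-1)-element singular subsets. -/
def IsCliqueN (n : ℕ) (C : Set (Finset ℤ)) : Prop :=
  (∀ X ∈ C, Sing n X ∧ X.card = n - 1) ∧
  ∀ X ∈ C, ∀ Y ∈ C, X ≠ Y → (X ∩ Y).card = n - 2 ∧ Sing n (X ∪ Y)

lemma mem_polarJ {n : ℕ} {i : ℤ} : i ∈ polarJ n ↔ i ≠ 0 ∧ -(n:ℤ) ≤ i ∧ i ≤ n := by
  simp [polarJ, Finset.mem_erase, Finset.mem_Icc, and_assoc]

lemma neg_mem_polarJ {n : ℕ} {i : ℤ} (h : i ∈ polarJ n) : -i ∈ polarJ n := by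
  rw [mem_polarJ] at h ⊢; omega

lemma card_polarJ (n : ℕ) : (polarJ n).card = 2*n := by
  rw [polarJ, Finset.card_erase_of_mem, Int.card_Icc]
  · omega
  · simp [Finset.mem_Icc]

lemma sing_subset {n : ℕ} {U X : Finset ℤ} (hU : Sing n U) (h : X ⊆ U) : Sing n X :=
  ⟨h.trans hU.1, fun i hi hni => hU.2 i (h hi) (h hni)⟩

lemma polar_cover {n : ℕ} {U : Finset ℤ} (hU : Sing n U) (hc : U.card = n) :
    polarJ n ⊆ U ∪ U.image (fun i => -i) := by
  have hsub : U ∪ U.image (fun i => -i) ⊆ polarJ n := by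
    intro x hx
    rcases Finset.mem_union.1 hx with h | h
    · exact hU.1 h
    · rcases Finset.mem_image.1 h with ⟨u, hu, rfl⟩
      exact neg_mem_polarJ (hU.1 hu)
  have hdisj : Disjoint U (U.image (fun i => -i)) := by
    rw [Finset.disjoint_left]
    intro x hx hx'
    rcases Finset.mem_image.1 hx' with ⟨u, hu, h⟩
    exact hU.2 u hu (by rw [show -u = x from h]; exact hx)
  have hcard : (U ∪ U.image (fun i => -i)).card = 2*n := by
    rw [Finset.card_union_of_disjoint hdisj, Finset.card_image_of_injective _ neg_injective, hc]
    omega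
  intro x hx
  have heq := Finset.eq_of_subset_of_card_le hsub (by rw [hcard, card_polarJ])
  rw [← heq] at hx; exact hx

lemma top_clique {n : ℕ} (hn : 2 ≤ n) {U : Finset ℤ} (hU : Sing n U) (hc : U.card = n) :
    IsCliqueN n {X : Finset ℤ | X ⊆ U ∧ X.card = n - 1} := by
  constructor
  · rintro X ⟨hXU, hXc⟩
    exact ⟨sing_subset hU hXU, hXc⟩
  · rintro X ⟨hXU, hXc⟩ Y ⟨hYU, hYc⟩ hne
    have hun : X ∪ Y = U := by
      apply Finset.eq_of_subset_of_card_le (Finset.union_subset hXU hYU)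
      by_contra h
      push_neg at h
      have h1 : (X ∪ Y).card ≤ U.card := Finset.card_le_card (Finset.union_subset hXU hYU)
      have h2 : X.card ≤ (X ∪ Y).card := Finset.card_le_card Finset.subset_union_left
      have : X = X ∪ Y := Finset.eq_of_subset_of_card_le Finset.subset_union_left (by omega)
      have hYX : Y ⊆ X := by rw [this]; exact Finset.subset_union_right
      exact hne (Finset.eq_of_subset_of_card_le hYX (by omega)).symm
    have hcc : (X ∪ Y).card + (X ∩ Y).card = X.card + Y.card :=
      Finset.card_union_add_card_inter X Y
    rw [hun, hc, hXc, hYc] at hcc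
    refine ⟨by omega, ?_⟩
    rw [hun]; exact hU

lemma sing_extend {n : ℕ} (hn : 2 ≤ n) {X : Finset ℤ} (hX : Sing n X) (hXc : X.card = n - 1) :
    ∃ U : Finset ℤ, Sing n U ∧ U.card = n ∧ X ⊆ U := by
  have hbig : (X ∪ X.image (fun i => -i)).card < (polarJ n).card := by
    have h1 : (X ∪ X.image (fun i => -i)).card ≤ X.card + (X.image (fun i => -i)).card :=
      Finset.card_union_le _ _
    have h2 : (X.image (fun i : ℤ => -i)).card ≤ X.card := Finset.card_image_le
    rw [card_polarJ]
    omega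
  have hns : ¬ polarJ n ⊆ X ∪ X.image (fun i => -i) := fun h =>
    absurd (Finset.card_le_card h) (by omega)
  obtain ⟨c, hcJ, hcn⟩ := Finset.not_subset.1 hns
  have hcX : c ∉ X := fun h => hcn (Finset.mem_union_left _ h)
  have hcnX : -c ∉ X := by
    intro h
    exact hcn (Finset.mem_union_right _ (Finset.mem_image.2 ⟨-c, h, by ring⟩))
  refine ⟨insert c X, ⟨Finset.insert_subset hcJ hX.1, ?_⟩, ?_, Finset.subset_insert _ _⟩
  · intro i hi hni
    rcases Finset.mem_insert.1 hi with h0 | hi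
    · rcases Finset.mem_insert.1 hni with h | h
      · have : c ≠ 0 := (mem_polarJ.1 hcJ).1
        omega
      · exact hcnX (by rw [← h0]; exact h)
    · rcases Finset.mem_insert.1 hni with h | h
      · exact hcnX (by rw [← h]; simpa using hi)
      · exact hX.2 i hi h
  · rw [Finset.card_insert_of_notMem hcX, hXc]; omega

lemma clique_subset_top {n : ℕ} (hn : 2 ≤ n) {C : Set (Finset ℤ)} (hC : IsCliqueN n C) :
    ∃ U : Finset ℤ, Sing n U ∧ U.card = n ∧
      C ⊆ {X : Finset ℤ | X ⊆ U ∧ X.card = n - 1} := by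
  by_cases h2 : ∃ X ∈ C, ∃ Y ∈ C, X ≠ Y
  · obtain ⟨X, hXC, Y, hYC, hne⟩ := h2
    obtain ⟨hint, hsingU⟩ := hC.2 X hXC Y hYC hne
    obtain ⟨hXs, hXc⟩ := hC.1 X hXC
    obtain ⟨hYs, hYc⟩ := hC.1 Y hYC
    have hcc : (X ∪ Y).card + (X ∩ Y).card = X.card + Y.card :=
      Finset.card_union_add_card_inter X Y
    have hUc : (X ∪ Y).card = n := by omega
    refine ⟨X ∪ Y, hsingU, hUc, ?_⟩
    intro Z hZC
    obtain ⟨hZs, hZc⟩ := hC.1 Z hZC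
    refine ⟨?_, hZc⟩
    intro c hcZ
    by_contra hcU
    -- c ∈ polarJ n, so c = -u for some u ∈ X ∪ Y
    have hcJ : c ∈ polarJ n := hZs.1 hcZ
    have := polar_cover hsingU hUc hcJ
    rcases Finset.mem_union.1 this with h | h
    · exact hcU h
    obtain ⟨u, hu, huc⟩ := Finset.mem_image.1 h
    have hZX : Z ≠ X := by rintro rfl; exact hcU (Finset.mem_union_left _ hcZ)
    have hZY : Z ≠ Y := by rintro rfl; exact hcU (Finset.mem_union_right _ hcZ)
    rcases Finset.mem_union.1 hu with hu' | hu'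
    · have hsing := (hC.2 Z hZC X hXC hZX).2
      exact hsing.2 c (Finset.mem_union_left _ hcZ)
        (by rw [show -c = u by omega]; exact Finset.mem_union_right _ hu')
    · have hsing := (hC.2 Z hZC Y hYC hZY).2
      exact hsing.2 c (Finset.mem_union_left _ hcZ)
        (by rw [show -c = u by omega]; exact Finset.mem_union_right _ hu')
  · push_neg at h2
    by_cases hne : ∃ X, X ∈ C
    · obtain ⟨X, hXC⟩ := hne
      obtain ⟨hXs, hXc⟩ := hC.1 X hXC
      obtain ⟨U, hUs, hUc, hXU⟩ := sing_extend hn hXs hXc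
      refine ⟨U, hUs, hUc, ?_⟩
      intro Z hZC
      have : Z = X := by
        by_contra h
        exact h (h2 Z hZC X hXC)
      subst this
      exact ⟨hXU, hXc⟩
    · push_neg at hne
      refine ⟨Finset.Icc (1:ℤ) n, ⟨?_, ?_⟩, ?_, ?_⟩
      · intro i hi
        rw [Finset.mem_Icc] at hi
        rw [mem_polarJ]
        omega
      · intro i hi hni
        rw [Finset.mem_Icc] at hi hni
        omega
      · rw [Int.card_Icc]; omega
      · intro Z hZ; exact absurd hZ (hne Z)

/-- In Γ_{n-2}(n), every maximal clique is a top ⟨U] with U maximal singular of size n;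
in particular every star [S,U] with |S| = n-2, |U| = n is contained in a top. -/
theorem stmt12 (n : ℕ) (hn : 2 ≤ n) :
    (∀ C : Set (Finset ℤ),
      IsCliqueN n C → (∀ D : Set (Finset ℤ), IsCliqueN n D → C ⊆ D → C = D) →
      ∃ U : Finset ℤ, Sing n U ∧ U.card = n ∧
        C = {X : Finset ℤ | X ⊆ U ∧ X.card = n - 1}) ∧
    (∀ S U : Finset ℤ, Sing n U → S ⊆ U → S.card = n - 2 → U.card = n →
      ∃ U' : Finset ℤ, Sing n U' ∧ U'.card = n ∧
        {X : Finset ℤ | S ⊆ X ∧ X ⊆ U ∧ X.card = n - 1} ⊆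
          {X : Finset ℤ | X ⊆ U' ∧ X.card = n - 1}) := by
  constructor
  · intro C hC hmax
    obtain ⟨U, hUs, hUc, hsub⟩ := clique_subset_top hn hC
    exact ⟨U, hUs, hUc, hmax _ (top_clique hn hUs hUc) hsub⟩
  · intro S U hU hSU hSc hUc
    exact ⟨U, hU, hUc, fun X hX => ⟨hX.2.1, hX.2.2⟩⟩
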